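/- A map c : {0,1}^q → ℕ (with q ≥ 2 and c(0,...,0)=0) is the vertex data of some facet-labeled simplicial complex if and only if for every pair of distinct indices i, j ∈ [q], there exists a tuple (a_1,...,a_q) ∈ {0,1}^q with a_i = 1, a_j = 0, and c(a_1,...,a_q) > 0. -/
import Mathlib

private def fiberEquiv {q : ℕ} (c : (Fin q → Bool) → ℕ) (a : Fin q → Bool) :
    {x : Σ b : Fin q → Bool, Fin (c b) // x.1 = a} ≃ Fin (c a) where
  toFun x := x.prop ▸ x.val.2
  invFun y := ⟨⟨a, y⟩, rfl⟩
  left_inv := by rintro ⟨⟨b, y⟩, h⟩; subst h; rfl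
  right_inv y := rfl

/-- a map `c : {0,1}^q → ℕ` with `q ≥ 2` and `c(0,…,0) = 0` is the vertex data
of some facet-labeled simplicial complex iff for all distinct `i j` there is a tuple `a`
with `a i = 1`, `a j = 0` and `c a > 0`. -/
theorem stmt1 (q : ℕ) (hq : 2 ≤ q) (c : (Fin q → Bool) → ℕ)
    (h0 : c (fun _ => false) = 0) :
    (∃ (n : ℕ) (F : Fin q → Finset (Fin n)),
      (∀ i, (F i).Nonempty) ∧
      (∀ i j, i ≠ j → ¬ F i ⊆ F j) ∧
      (∀ a : Fin q → Bool,
        c a = (Finset.univ.filter (fun v : Fin n => ∀ i, (v ∈ F i ↔ a i = true))).card)) ↔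
    (∀ i j : Fin q, i ≠ j →
      ∃ a : Fin q → Bool, a i = true ∧ a j = false ∧ 0 < c a) := by
  constructor
  · rintro ⟨n, F, hne, hinc, hc⟩ i j hij
    obtain ⟨v, hvi, hvj⟩ := Finset.not_subset.mp (hinc i j hij)
    refine ⟨fun k => decide (v ∈ F k), by simp [hvi], by simp [hvj], ?_⟩
    rw [hc]
    apply Finset.card_pos.mpr
    exact ⟨v, Finset.mem_filter.mpr ⟨Finset.mem_univ v, fun k => by simp⟩⟩
  · intro h
    set n := ∑ a : Fin q → Bool, c a with hn
    have hcard : Fintype.card (Σ a : Fin q → Bool, Fin (c a)) = n := by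
      simp [Fintype.card_sigma, hn]
    let e : (Σ a : Fin q → Bool, Fin (c a)) ≃ Fin n := Fintype.equivFinOfCardEq hcard
    let pat : Fin n → (Fin q → Bool) := fun v => (e.symm v).1
    have hpat : ∀ x, pat (e x) = x.1 := fun x => by simp [pat]
    haveI : Nontrivial (Fin q) := Fin.nontrivial_iff_two_le.mpr hq
    refine ⟨n, fun i => Finset.univ.filter (fun v => pat v i = true), ?_, ?_, ?_⟩
    · intro i
      obtain ⟨j, hj⟩ := exists_ne i
      obtain ⟨a, hai, haj, hpos⟩ := h i j (Ne.symm hj)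
      exact ⟨e ⟨a, ⟨0, hpos⟩⟩, Finset.mem_filter.mpr ⟨Finset.mem_univ _, by rw [hpat]; exact hai⟩⟩
    · intro i j hij
      obtain ⟨a, hai, haj, hpos⟩ := h i j hij
      rw [Finset.not_subset]
      refine ⟨e ⟨a, ⟨0, hpos⟩⟩, ?_, ?_⟩
      · exact Finset.mem_filter.mpr ⟨Finset.mem_univ _, by rw [hpat]; exact hai⟩
      · simp only [Finset.mem_filter, hpat]
        simp [haj]
    · intro a
      have heq : (Finset.univ.filter
          (fun v : Fin n => ∀ i, (v ∈ Finset.univ.filter (fun w => pat w i = true) ↔ a i = true)))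
          = Finset.univ.filter (fun v => pat v = a) := by
        ext v
        simp only [Finset.mem_filter, Finset.mem_univ, true_and, funext_iff]
        constructor
        · intro hv i
          have := hv i
          rcases Bool.eq_false_or_eq_true (a i) with h' | h' <;>
            rcases Bool.eq_false_or_eq_true (pat v i) with h'' | h'' <;>
            simp_all
        · intro hv i
          rw [hv i]
      rw [heq]
      have hbij : (Finset.univ.filter (fun v => pat v = a)).card
          = (Finset.univ.filter (fun x : Σ b : Fin q → Bool, Fin (c b) => x.1 = a)).card := by
        refine (Finset.card_equiv e fun x => ?_).symm
        simp [pat]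
      rw [hbij, ← Fintype.card_subtype, Fintype.card_congr (fiberEquiv c a), Fintype.card_fin]
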